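/- arXiv:1812.01847 — 2 statements merged into one kernel-verified Lean document; each statement's English description precedes it below -/
import Mathlib

section
/- Let n ≥ 1 and s ∈ (0,1). For r ∈ (0,1) let A_r = B_1 \ B_r and x_1 ∈ ∂B_1. Then the principal value H_s(x_1, A_r) exists for every r ∈ (0,1), the map r ↦ H_s(x_1, A_r) is strictly increasing on (0,1), and H_s(x_1, A_r) ≥ k(n,s) > 0 for all r ∈ (0,1), where k(n,s) := H_s(x_1, B_1) is the fractional mean curvature of the unit ball at a boundary point. -/
open MeasureTheory Filter Metric Set

/-- `HasFracMeanCurvAt n s E x H` means that the fractional mean curvature of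
`E ⊆ ℝⁿ` at the point `x`, i.e. the principal value
`lim_{ε→0⁺} ∫_{|y-x|>ε} (χ_{Eᶜ}(y) - χ_E(y)) |x-y|^{-(n+s)} dy`, exists and equals `H`. -/
def HasFracMeanCurvAt (n : ℕ) (s : ℝ) (E : Set (EuclideanSpace ℝ (Fin n)))
    (x : EuclideanSpace ℝ (Fin n)) (H : ℝ) : Prop :=
  Tendsto (fun ε : ℝ =>
      ∫ y in {y : EuclideanSpace ℝ (Fin n) | ε < dist y x},
        (Set.indicator Eᶜ (fun _ => (1 : ℝ)) y - Set.indicator E (fun _ => (1 : ℝ)) y)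
          * ‖x - y‖ ^ (-((n : ℝ) + s)))
    (nhdsWithin 0 (Set.Ioi 0)) (nhds H)

open scoped ENNReal NNReal

noncomputable section
namespace AnnulusCurv

variable {n : ℕ} {s : ℝ}

local notation "E" => EuclideanSpace ℝ (Fin n)

def w (n : ℕ) (s : ℝ) (x y : EuclideanSpace ℝ (Fin n)) : ℝ := ‖x - y‖ ^ (-((n : ℝ) + s))

lemma w_nonneg (x y : EuclideanSpace ℝ (Fin n)) : 0 ≤ w n s x y :=
  Real.rpow_nonneg (norm_nonneg _) _

lemma measurable_w (x : EuclideanSpace ℝ (Fin n)) : Measurable (w n s x) :=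
  (measurable_const.sub measurable_id).norm.pow_const _

lemma integrable_far (hs : 0 < s) (x : EuclideanSpace ℝ (Fin n)) {ε : ℝ} (hε : 0 < ε) :
    IntegrableOn (w n s x) {y | ε < dist y x} := by
  have hnr : (Module.finrank ℝ (EuclideanSpace ℝ (Fin n)) : ℝ) < (n : ℝ) + s := by
    rw [finrank_euclideanSpace_fin]; linarith
  have hbase : Integrable (fun y : EuclideanSpace ℝ (Fin n) => (1 + ‖y‖) ^ (-((n : ℝ) + s))) :=
    integrable_one_add_norm hnr
  have hcomp : Integrable (fun y : EuclideanSpace ℝ (Fin n) => (1 + ‖x - y‖) ^ (-((n : ℝ) + s))) := by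
    have hmp : MeasurePreserving (fun y : EuclideanSpace ℝ (Fin n) => x - y) volume volume :=
      Measure.measurePreserving_sub_left volume x
    exact (hmp.integrable_comp_emb (Homeomorph.subLeft x).measurableEmbedding).mpr hbase
  have hmeas : MeasurableSet {y : EuclideanSpace ℝ (Fin n) | ε < dist y x} :=
    measurableSet_lt measurable_const (measurable_id.dist measurable_const)
  refine ((hcomp.const_mul (((1+ε)/ε) ^ ((n : ℝ) + s))).integrableOn.mono'
      (measurable_w x).aestronglyMeasurable ?_)
  filter_upwards [ae_restrict_mem hmeas] with y hy
  have hd : ε < ‖x - y‖ := by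
    rw [dist_eq_norm] at hy; rwa [norm_sub_rev]
  have h1 : 1 + ‖x - y‖ ≤ (1 + ε) / ε * ‖x - y‖ := by
    rw [div_mul_eq_mul_div, le_div_iff₀ hε]; nlinarith [hd, hε]
  have hpos : (0:ℝ) < ‖x - y‖ := lt_trans hε hd
  have key : ‖x - y‖ ^ (-((n : ℝ) + s)) ≤ ((1+ε)/ε) ^ ((n : ℝ) + s) * (1 + ‖x - y‖) ^ (-((n : ℝ) + s)) := by
    rw [Real.rpow_neg hpos.le, Real.rpow_neg (by positivity)]
    have h2 : (1 + ‖x - y‖) ^ ((n : ℝ) + s) ≤ ((1+ε)/ε) ^ ((n : ℝ) + s) * ‖x - y‖ ^ ((n : ℝ) + s) := by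
      rw [← Real.mul_rpow (by positivity) hpos.le]
      exact Real.rpow_le_rpow (by positivity) h1 (by positivity)
    rw [← one_div, ← div_eq_mul_inv, div_le_div_iff₀ (by positivity) (by positivity)]
    linarith [h2]
  rw [Real.norm_of_nonneg (w_nonneg x y)]
  exact key


lemma slab_volume (x : E) (hx : ‖x‖ = 1) {t : ℝ} (ht : 0 < t) (ht1 : t ≤ 1) :
    volume ({y : E | 1 - t^2/2 ≤ (inner ℝ y x : ℝ) ∧ (inner ℝ y x : ℝ) < 1} ∩ closedBall x t)
      ≤ ENNReal.ofReal ((2*t)^n * (t/2)) * volume (ball (0 : E) 1) := by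
  set a : ℝ := t^2/2 with ha
  have ha0 : 0 < a := by positivity
  set S : Set E := {y : E | 1 - a ≤ (inner ℝ y x : ℝ) ∧ (inner ℝ y x : ℝ) < 1} ∩ closedBall x t with hS
  set K : ℕ := ⌈t / a⌉₊ with hK
  have hta : t / a = 2 / t := by rw [ha]; field_simp
  have hSmeas : MeasurableSet S := by
    refine MeasurableSet.inter (MeasurableSet.inter ?_ ?_) measurableSet_closedBall
    · exact measurableSet_le measurable_const
        (measurable_id.inner (𝕜 := ℝ) measurable_const)
    · exact measurableSet_lt (measurable_id.inner (𝕜 := ℝ) measurable_const) measurable_const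
  set A : ℕ → Set E := fun k => (fun y : E => y + (-((k : ℝ) * a)) • x) ⁻¹' S with hA
  have hAmeas : ∀ k, MeasurableSet (A k) := fun k =>
    hSmeas.preimage (measurable_id.add_const _)
  have hAvol : ∀ k, volume (A k) = volume S := fun k =>
    measure_preimage_add_right volume _ S
  have hmem : ∀ k : ℕ, ∀ y ∈ A k,
      (1 - a + k * a ≤ (inner ℝ y x : ℝ) ∧ (inner ℝ y x : ℝ) < 1 + k * a) ∧
        ‖y - x‖ ≤ t + k * a := by
    intro k y hy
    obtain ⟨⟨h1, h2⟩, h3⟩ := hy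
    have hi : (inner ℝ (y + (-((k : ℝ) * a)) • x) x : ℝ) = (inner ℝ y x : ℝ) - k * a := by
      rw [inner_add_left, real_inner_smul_left, real_inner_self_eq_norm_sq, hx]
      ring
    rw [hi] at h1 h2
    refine ⟨⟨by linarith, by linarith⟩, ?_⟩
    have h4 : ‖y + (-((k : ℝ) * a)) • x - x‖ ≤ t := mem_closedBall_iff_norm.mp h3
    calc ‖y - x‖ = ‖(y + (-((k : ℝ) * a)) • x - x) + ((k : ℝ) * a) • x‖ := by
          congr 1; module
      _ ≤ ‖y + (-((k : ℝ) * a)) • x - x‖ + ‖((k : ℝ) * a) • x‖ := norm_add_le _ _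
      _ ≤ t + k * a := by
          rw [norm_smul, hx, Real.norm_eq_abs, abs_of_nonneg (by positivity), mul_one]
          exact add_le_add_left h4 _
  -- the translates are pairwise disjoint
  have key : ∀ k l : ℕ, k < l → Disjoint (A k) (A l) := by
    intro k l hkl
    rw [Set.disjoint_left]
    intro y hyk hyl
    have h1 := (hmem k y hyk).1.2
    have h2 := (hmem l y hyl).1.1
    have hcast : (k : ℝ) + 1 ≤ (l : ℝ) := by exact_mod_cast hkl
    nlinarith
  have hdisj : (↑(Finset.range K) : Set ℕ).PairwiseDisjoint A := by
    intro k _ l _ hkl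
    rcases hkl.lt_or_gt with h | h
    · exact key _ _ h
    · exact (key _ _ h).symm
  have hsum : (K : ℝ≥0∞) * volume S = volume (⋃ k ∈ Finset.range K, A k) := by
    rw [measure_biUnion_finset hdisj (fun k _ => hAmeas k)]
    rw [Finset.sum_congr rfl (fun k _ => hAvol k), Finset.sum_const, Finset.card_range,
      nsmul_eq_mul]
  have hsub : (⋃ k ∈ Finset.range K, A k) ⊆ closedBall x (2 * t) := by
    rintro y hy
    simp only [Finset.mem_range, Set.mem_iUnion] at hy
    obtain ⟨k, hk, hyk⟩ := hy
    have hka : (k : ℝ) * a < t := by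
      have : (k : ℝ) < t / a := Nat.lt_ceil.mp hk
      calc (k : ℝ) * a < t / a * a := by exact mul_lt_mul_of_pos_right this ha0
        _ = t := by field_simp
    have := (hmem k y hyk).2
    rw [mem_closedBall, dist_eq_norm]
    linarith
  have hcb : volume (closedBall x (2 * t)) = ENNReal.ofReal ((2 * t) ^ n) * volume (ball (0 : E) 1) := by
    rw [Measure.addHaar_closedBall volume x (by positivity), finrank_euclideanSpace_fin]
  have hKvol : (K : ℝ≥0∞) * volume S ≤ ENNReal.ofReal ((2 * t) ^ n) * volume (ball (0 : E) 1) := by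
    rw [hsum, ← hcb]
    exact measure_mono hsub
  have h2t : ENNReal.ofReal (2 / t) ≤ (K : ℝ≥0∞) := by
    rw [← hta, ← ENNReal.ofReal_natCast K]
    exact ENNReal.ofReal_le_ofReal (Nat.le_ceil _)
  calc volume S = (ENNReal.ofReal (t / 2) * ENNReal.ofReal (2 / t)) * volume S := by
        rw [← ENNReal.ofReal_mul (by positivity)]
        have : t / 2 * (2 / t) = 1 := by field_simp
        rw [this, ENNReal.ofReal_one, one_mul]
    _ ≤ ENNReal.ofReal (t / 2) * ((K : ℝ≥0∞) * volume S) := by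
        rw [mul_assoc]
        exact mul_le_mul' le_rfl (mul_le_mul' h2t le_rfl)
    _ ≤ ENNReal.ofReal (t / 2) * (ENNReal.ofReal ((2 * t) ^ n) * volume (ball (0 : E) 1)) :=
        mul_le_mul' le_rfl hKvol
    _ = ENNReal.ofReal ((2 * t) ^ n * (t / 2)) * volume (ball (0 : E) 1) := by
        rw [← mul_assoc, ← ENNReal.ofReal_mul (by positivity), mul_comm (t / 2)]


/-- The sliver: points in the halfspace below `x` but outside the unit ball. -/
def sliver (n : ℕ) (x : EuclideanSpace ℝ (Fin n)) : Set (EuclideanSpace ℝ (Fin n)) :=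
  {y | (inner ℝ y x : ℝ) < 1} \ ball 0 1

lemma measurableSet_sliver (x : E) : MeasurableSet (sliver n x) :=
  ((measurableSet_lt (measurable_id.inner (𝕜 := ℝ) measurable_const)
    measurable_const)).diff measurableSet_ball

lemma sliver_inter_closedBall_subset (x : E) (hx : ‖x‖ = 1) {t : ℝ} :
    sliver n x ∩ closedBall x t ⊆
      {y : E | 1 - t^2/2 ≤ (inner ℝ y x : ℝ) ∧ (inner ℝ y x : ℝ) < 1} ∩ closedBall x t := by
  rintro y ⟨⟨h1, h2⟩, h3⟩
  have hyn : (1:ℝ) ≤ ‖y‖ := by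
    by_contra h
    exact h2 (mem_ball_zero_iff.mpr (lt_of_not_ge h))
  have hd : ‖y - x‖ ≤ t := mem_closedBall_iff_norm.mp h3
  have hsq : ‖y - x‖ ^ 2 = ‖y‖^2 - 2 * (inner ℝ y x : ℝ) + ‖x‖^2 := norm_sub_sq_real y x
  have h1' : (1:ℝ) ≤ ‖y‖^2 := by nlinarith [norm_nonneg y]
  have hsq' : ‖y - x‖^2 ≤ t^2 := by nlinarith [norm_nonneg (y - x)]
  refine ⟨⟨by rw [hx] at hsq; nlinarith, h1⟩, h3⟩

lemma lintegral_sliver_near (hs : s ∈ Set.Ioo (0:ℝ) 1) (x : E) (hx : ‖x‖ = 1) :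
    ∫⁻ y in sliver n x ∩ closedBall x 1, ENNReal.ofReal (w n s x y) < ∞ := by
  set t : ℕ → ℝ := fun j => (2:ℝ) ^ (-(j:ℝ)) with htdef
  have ht_pos : ∀ j, 0 < t j := fun j => Real.rpow_pos_of_pos two_pos _
  have ht_le_one : ∀ j, t j ≤ 1 := by
    intro j
    rw [htdef]
    calc (2:ℝ) ^ (-(j:ℝ)) ≤ (2:ℝ)^(0:ℝ) :=
          Real.rpow_le_rpow_of_exponent_le one_le_two (neg_nonpos.mpr (Nat.cast_nonneg j))
      _ = 1 := Real.rpow_zero 2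
  set U : ℕ → Set E := fun j => (sliver n x ∩ closedBall x (t j)) ∩ {y | t (j+1) < dist y x}
    with hU
  -- coverage
  have hxnot : x ∉ sliver n x := by
    intro hmem
    have : (inner ℝ x x : ℝ) < 1 := hmem.1
    rw [real_inner_self_eq_norm_sq, hx] at this; norm_num at this
  have hcov : sliver n x ∩ closedBall x 1 ⊆ ⋃ j, U j := by
    rintro y ⟨hy1, hy2⟩
    have hd_pos : 0 < dist y x := by
      rw [dist_pos]; rintro rfl; exact hxnot hy1
    have hex : ∃ j : ℕ, t (j + 1) < dist y x := by
      obtain ⟨N, hN⟩ := exists_pow_lt_of_lt_one hd_pos (by norm_num : (1/2 : ℝ) < 1)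
      refine ⟨N, lt_of_le_of_lt ?_ hN⟩
      rw [htdef]
      have heq : ((1:ℝ)/2)^N = (2:ℝ) ^ (-(N:ℝ)) := by
        rw [Real.rpow_neg (by norm_num), Real.rpow_natCast, one_div, inv_pow]
      rw [heq]
      exact Real.rpow_le_rpow_of_exponent_le one_le_two (by push_cast; linarith)
    set j₀ := Nat.find hex with hj₀
    refine Set.mem_iUnion.mpr ⟨j₀, ⟨⟨hy1, ?_⟩, Nat.find_spec hex⟩⟩
    rcases Nat.eq_zero_or_pos j₀ with h0 | hpos
    · rw [h0]
      simpa [htdef] using hy2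
    · obtain ⟨m, hm⟩ := Nat.exists_eq_succ_of_ne_zero hpos.ne'
      have := Nat.find_min hex (m := m) (by omega)
      rw [mem_closedBall]
      push_neg at this
      rw [hm]
      exact this
  have hUmeas : ∀ j, MeasurableSet (U j) :=
    fun j => ((measurableSet_sliver x).inter measurableSet_closedBall).inter
      (measurableSet_lt measurable_const (measurable_id.dist measurable_const))
  set V := volume (ball (0:E) 1) with hV
  have hVfin : V < ∞ := measure_ball_lt_top
  set q : ℝ≥0∞ := ENNReal.ofReal ((2:ℝ)^(s-1)) with hq
  set c : ℝ≥0∞ := ENNReal.ofReal ((2:ℝ)^(2*(n:ℝ) + s - 1)) with hc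
  have hA : ∀ j : ℕ, (t (j+1)) ^ (-((n:ℝ)+s)) * ((2 * t j)^n * (t j / 2))
      = (2:ℝ)^(2*(n:ℝ) + s - 1) * ((2:ℝ)^(s-1))^j := by
    intro j
    set u : ℝ := (j:ℝ) with hu
    have ht1 : t (j+1) = (2:ℝ)^(-(u+1)) := by
      simp only [htdef]; congr 1; push_cast; ring
    have ht0 : t j = (2:ℝ)^(-u) := rfl
    have hb : (2:ℝ) * (2:ℝ)^(-u) = (2:ℝ)^(1-u) := by
      rw [sub_eq_add_neg, Real.rpow_add two_pos, Real.rpow_one]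
    have hcdiv : (2:ℝ)^(-u) / 2 = (2:ℝ)^(-u-1) := by
      rw [sub_eq_add_neg, Real.rpow_add two_pos, Real.rpow_neg_one, div_eq_mul_inv]
    rw [ht1, ht0, hb, hcdiv, ← Real.rpow_mul two_pos.le, ← Real.rpow_natCast ((2:ℝ)^(1-u)) n,
      ← Real.rpow_mul two_pos.le, ← Real.rpow_add two_pos, ← Real.rpow_add two_pos,
      ← Real.rpow_natCast ((2:ℝ)^(s-1)) j, ← Real.rpow_mul two_pos.le,
      ← Real.rpow_add two_pos]
    congr 1
    push_cast
    ring
  have hterm : ∀ j : ℕ, ∫⁻ y in U j, ENNReal.ofReal (w n s x y) ≤ c * q^j * V := by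
    intro j
    have hb : ∀ y ∈ U j, ENNReal.ofReal (w n s x y)
        ≤ ENNReal.ofReal ((t (j+1)) ^ (-((n:ℝ)+s))) := by
      intro y hy
      apply ENNReal.ofReal_le_ofReal
      have hlt : t (j+1) < ‖x - y‖ := by
        have h2 := hy.2
        rw [mem_setOf_eq, dist_eq_norm, norm_sub_rev] at h2
        exact h2
      exact Real.rpow_le_rpow_of_nonpos (ht_pos _) hlt.le
        (by have := hs.1; push_cast; nlinarith [Nat.cast_nonneg (α := ℝ) n])
    calc ∫⁻ y in U j, ENNReal.ofReal (w n s x y)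
        ≤ ∫⁻ _ in U j, ENNReal.ofReal ((t (j+1)) ^ (-((n:ℝ)+s))) :=
          setLIntegral_mono measurable_const hb
      _ = ENNReal.ofReal ((t (j+1)) ^ (-((n:ℝ)+s))) * volume (U j) := setLIntegral_const _ _
      _ ≤ ENNReal.ofReal ((t (j+1)) ^ (-((n:ℝ)+s)))
            * (ENNReal.ofReal ((2 * t j)^n * (t j / 2)) * V) := by
          refine mul_le_mul' le_rfl ?_
          refine le_trans (measure_mono ?_) (slab_volume x hx (ht_pos j) (ht_le_one j))
          exact subset_trans Set.inter_subset_left (sliver_inter_closedBall_subset x hx)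
      _ = c * q^j * V := by
          rw [← mul_assoc, ← ENNReal.ofReal_mul (Real.rpow_nonneg (ht_pos _).le _), hA j,
            ENNReal.ofReal_mul (Real.rpow_nonneg two_pos.le _), hc, hq,
            ENNReal.ofReal_pow (Real.rpow_nonneg two_pos.le _)]
  have hq1 : q < 1 := by
    rw [hq, ENNReal.ofReal_lt_one]
    exact Real.rpow_lt_one_of_one_lt_of_neg one_lt_two (by linarith [hs.2])
  calc ∫⁻ y in sliver n x ∩ closedBall x 1, ENNReal.ofReal (w n s x y)
      ≤ ∫⁻ y in ⋃ j, U j, ENNReal.ofReal (w n s x y) := lintegral_mono_set hcov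
    _ ≤ ∑' j, ∫⁻ y in U j, ENNReal.ofReal (w n s x y) := lintegral_iUnion_le _ _
    _ ≤ ∑' j : ℕ, c * q^j * V := ENNReal.tsum_le_tsum hterm
    _ = c * (1 - q)⁻¹ * V := by
        rw [ENNReal.tsum_mul_right, ENNReal.tsum_mul_left, ENNReal.tsum_geometric]
    _ < ∞ := by
        apply ENNReal.mul_lt_top
        apply ENNReal.mul_lt_top
        · exact ENNReal.ofReal_lt_top
        · exact ENNReal.inv_lt_top.mpr (tsub_pos_of_lt hq1)
        · exact hVfin


/-- The open halfspace determined by a unit vector `x`. -/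
def hspace (n : ℕ) (x : EuclideanSpace ℝ (Fin n)) : Set (EuclideanSpace ℝ (Fin n)) :=
  {y | (inner ℝ y x : ℝ) < 1}

lemma hspace_null (x : E) (hx : ‖x‖ = 1) :
    volume {y : E | (inner ℝ y x : ℝ) = 1} = 0 := by
  have hker : {y : E | (inner ℝ y x : ℝ) = 1}
      = (fun y : E => y + (-x)) ⁻¹' (LinearMap.ker (innerSL ℝ x : E →ₗ[ℝ] ℝ) : Set E) := by
    ext y
    simp only [mem_setOf_eq, mem_preimage, SetLike.mem_coe, LinearMap.mem_ker,
      ContinuousLinearMap.coe_coe, innerSL_apply_apply]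
    rw [inner_add_right, inner_neg_right, real_inner_self_eq_norm_sq, hx]
    constructor
    · intro h; rw [real_inner_comm, h]; norm_num
    · intro h; rw [real_inner_comm]; nlinarith [h]
  rw [hker, measure_preimage_add_right]
  refine Measure.addHaar_submodule _ _ ?_
  intro htop
  have : x ∈ LinearMap.ker (innerSL ℝ x : E →ₗ[ℝ] ℝ) := htop ▸ Submodule.mem_top
  rw [LinearMap.mem_ker] at this
  simp only [ContinuousLinearMap.coe_coe, innerSL_apply_apply] at this
  rw [real_inner_self_eq_norm_sq, hx] at this
  norm_num at this

section Reflection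

/-- Reflection across the tangent hyperplane at `x`. -/
def refl (n : ℕ) (x : EuclideanSpace ℝ (Fin n)) : EuclideanSpace ℝ (Fin n) →
    EuclideanSpace ℝ (Fin n) :=
  fun y => x + (Submodule.reflection ((ℝ ∙ x)ᗮ)) (y - x)

lemma refl_dist (x y : E) : dist (refl n x y) x = dist y x := by
  rw [dist_eq_norm, dist_eq_norm, refl]
  simp only [add_sub_cancel_left]
  rw [LinearIsometryEquiv.norm_map]

lemma inner_reflection (x z : E) (hx : ‖x‖ = 1) :
    (inner ℝ ((Submodule.reflection ((ℝ ∙ x)ᗮ)) z) x : ℝ) = - (inner ℝ z x : ℝ) := by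
  rw [Submodule.reflection_apply]
  rw [inner_sub_left]
  have hp : (inner ℝ (((ℝ ∙ x)ᗮ).starProjection z) x : ℝ) = 0 := by
    have hmem := Submodule.starProjection_apply_mem ((ℝ ∙ x)ᗮ) z
    rw [Submodule.mem_orthogonal] at hmem
    rw [real_inner_comm]
    exact hmem x (Submodule.mem_span_singleton_self x)
  rw [two_smul, inner_add_left, hp]
  ring

lemma refl_inner (x y : E) (hx : ‖x‖ = 1) :
    (inner ℝ (refl n x y) x : ℝ) = 2 - (inner ℝ y x : ℝ) := by
  rw [refl, inner_add_left, inner_reflection x _ hx, inner_sub_left,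
    real_inner_self_eq_norm_sq, hx]
  ring

lemma refl_measurePreserving (x : E) : MeasurePreserving (refl n x) volume volume := by
  have : refl n x = (fun z : E => x + z) ∘ ⇑(Submodule.reflection ((ℝ ∙ x)ᗮ)) ∘ (fun y : E => y + (-x)) := by
    funext y; simp [refl, sub_eq_add_neg]
  rw [this]
  exact (measurePreserving_add_left volume x).comp
    ((LinearIsometryEquiv.measurePreserving _).comp (measurePreserving_add_right volume (-x)))

lemma refl_measurableEmbedding (x : E) : MeasurableEmbedding (refl n x) := by
  have h : refl n x = ⇑(((Homeomorph.addRight (-x)).trans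
      (Submodule.reflection ((ℝ ∙ x)ᗮ)).toHomeomorph).trans (Homeomorph.addLeft x)) := by
    funext y; simp [refl, sub_eq_add_neg]
  rw [h]
  exact (((Homeomorph.addRight (-x)).trans
      (Submodule.reflection ((ℝ ∙ x)ᗮ)).toHomeomorph).trans (Homeomorph.addLeft x)).measurableEmbedding

end Reflection

lemma refl_w (x y : E) : w n s x (refl n x y) = w n s x y := by
  unfold w
  congr 1
  have : x - refl n x y = -((Submodule.reflection ((ℝ ∙ x)ᗮ)) (y - x)) := by
    simp [refl]
  rw [this, norm_neg, LinearIsometryEquiv.norm_map, norm_sub_rev]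

lemma halfspace_integral_zero (x : E) (hx : ‖x‖ = 1) (ε : ℝ) :
    ∫ y in {y : E | ε < dist y x},
      (Set.indicator (hspace n x)ᶜ (fun _ => (1:ℝ)) y
        - Set.indicator (hspace n x) (fun _ => (1:ℝ)) y) * w n s x y = 0 := by
  set f : E → ℝ := fun y =>
    (Set.indicator (hspace n x)ᶜ (fun _ => (1:ℝ)) y
      - Set.indicator (hspace n x) (fun _ => (1:ℝ)) y) * w n s x y with hf
  set Rε := {y : E | ε < dist y x} with hRε
  have hpre : refl n x ⁻¹' Rε = Rε := by
    ext y
    simp only [hRε, mem_preimage, mem_setOf_eq, refl_dist]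
  have h1 : ∫ y in Rε, f y = ∫ y in Rε, f (refl n x y) := by
    conv_lhs => rw [← (refl_measurePreserving x).setIntegral_preimage_emb
      (refl_measurableEmbedding x) f Rε]
    rw [hpre]
  have hae_ne : ∀ᵐ y : E, (inner ℝ y x : ℝ) ≠ 1 := by
    have h0 := hspace_null x hx
    rw [ae_iff]
    simpa using h0
  have hae : (fun y => f (refl n x y)) =ᵐ[volume.restrict Rε] (fun y => - f y) := by
    apply ae_restrict_of_ae
    filter_upwards [hae_ne] with y hy
    have hi := refl_inner x y hx
    by_cases hlt : (inner ℝ y x : ℝ) < 1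
    · have hmem : y ∈ hspace n x := hlt
      have hnot : refl n x y ∉ hspace n x := by
        simp only [hspace, mem_setOf_eq, hi, not_lt]; linarith
      simp only [hf, Set.indicator_of_mem (Set.mem_compl hnot),
        Set.indicator_of_notMem (Set.notMem_compl_iff.mpr hmem),
        Set.indicator_of_mem hmem, Set.indicator_of_notMem hnot, refl_w]
      ring
    · have hgt : (1:ℝ) < (inner ℝ y x : ℝ) := lt_of_le_of_ne (not_lt.mp hlt) (Ne.symm hy)
      have hnot : y ∉ hspace n x := by
        simp only [hspace, mem_setOf_eq, not_lt]; linarith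
      have hmem : refl n x y ∈ hspace n x := by
        simp only [hspace, mem_setOf_eq, hi]; linarith
      simp only [hf, Set.indicator_of_mem (Set.mem_compl hnot),
        Set.indicator_of_notMem (Set.notMem_compl_iff.mpr hmem),
        Set.indicator_of_mem hmem, Set.indicator_of_notMem hnot, refl_w]
      ring
  have h2 : ∫ y in Rε, f (refl n x y) = - ∫ y in Rε, f y := by
    rw [integral_congr_ae hae, integral_neg]
  have : ∫ y in Rε, f y = - ∫ y in Rε, f y := h1.trans h2
  linarith


lemma integrableOn_sliver (hs : s ∈ Set.Ioo (0:ℝ) 1) (x : E) (hx : ‖x‖ = 1) :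
    IntegrableOn (w n s x) (sliver n x) := by
  have hsplit : sliver n x ⊆ (sliver n x ∩ closedBall x 1) ∪ {y : E | 1 < dist y x} := by
    intro y hy
    by_cases h : dist y x ≤ 1
    · exact Or.inl ⟨hy, mem_closedBall.mpr h⟩
    · exact Or.inr (lt_of_not_ge h)
  refine IntegrableOn.mono_set ?_ hsplit
  apply IntegrableOn.union
  · constructor
    · exact (measurable_w x).aestronglyMeasurable.restrict
    · rw [hasFiniteIntegral_iff_norm]
      have : ∀ y : E, ENNReal.ofReal ‖w n s x y‖ = ENNReal.ofReal (w n s x y) := fun y => by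
        rw [Real.norm_of_nonneg (w_nonneg x y)]
      simp_rw [this]
      exact lintegral_sliver_near hs x hx
  · exact integrable_far hs.1 x one_pos

lemma ball_subset_hspace (x : E) (hx : ‖x‖ = 1) : ball (0:E) 1 ⊆ hspace n x := by
  intro y hy
  have h1 : (inner ℝ y x : ℝ) ≤ ‖y‖ * ‖x‖ := real_inner_le_norm y x
  have h2 : ‖y‖ < 1 := mem_ball_zero_iff.mp hy
  have : (inner ℝ y x : ℝ) < 1 := by rw [hx] at h1; nlinarith [h1, h2]
  exact this

/-- Pointwise decomposition of the ball integrand into halfspace + sliver parts. -/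
lemma ball_decomp (x : E) (hx : ‖x‖ = 1) (y : E) :
    (Set.indicator (ball (0:E) 1)ᶜ (fun _ => (1:ℝ)) y
        - Set.indicator (ball (0:E) 1) (fun _ => (1:ℝ)) y) * w n s x y
      = (Set.indicator (hspace n x)ᶜ (fun _ => (1:ℝ)) y
          - Set.indicator (hspace n x) (fun _ => (1:ℝ)) y) * w n s x y
        + 2 * Set.indicator (sliver n x) (w n s x) y := by
  by_cases hB : y ∈ ball (0:E) 1
  · have hH : y ∈ hspace n x := ball_subset_hspace x hx hB
    have hS : y ∉ sliver n x := fun h => h.2 hB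
    simp [Set.indicator_of_mem, Set.indicator_of_notMem, hB, hH, hS,
      Set.notMem_compl_iff.mpr hB, Set.notMem_compl_iff.mpr hH]
  · by_cases hH : y ∈ hspace n x
    · have hS : y ∈ sliver n x := ⟨hH, hB⟩
      simp only [Set.indicator_of_mem (Set.mem_compl hB), Set.indicator_of_notMem hB,
        Set.indicator_of_mem hH, Set.indicator_of_notMem (Set.notMem_compl_iff.mpr hH),
        Set.indicator_of_mem hS]
      ring
    · have hS : y ∉ sliver n x := fun h => hH h.1
      simp only [Set.indicator_of_mem (Set.mem_compl hB), Set.indicator_of_notMem hB,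
        Set.indicator_of_mem (Set.mem_compl hH), Set.indicator_of_notMem hH,
        Set.indicator_of_notMem hS]
      ring

lemma measurableSet_far (x : E) (ε : ℝ) : MeasurableSet {y : E | ε < dist y x} :=
  measurableSet_lt measurable_const (measurable_id.dist measurable_const)

lemma singleton_null (x : E) (hx : ‖x‖ = 1) : volume ({x} : Set E) = 0 := by
  refine measure_mono_null ?_ (hspace_null x hx)
  rintro y rfl
  simp only [mem_setOf_eq, real_inner_self_eq_norm_sq, hx]
  norm_num

/-- The key convergence: integrals of the sliver part over shrinking annuli converge. -/
lemma tendsto_sliver_part (hs : s ∈ Set.Ioo (0:ℝ) 1) (x : E) (hx : ‖x‖ = 1) :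
    Tendsto (fun ε : ℝ => ∫ y in {y : E | ε < dist y x},
        2 * Set.indicator (sliver n x) (w n s x) y)
      (nhdsWithin 0 (Set.Ioi 0)) (nhds (2 * ∫ y in sliver n x, w n s x y)) := by
  have hint : Integrable (fun y => 2 * Set.indicator (sliver n x) (w n s x) y) := by
    have := ((integrableOn_sliver hs x hx).integrable_indicator
      (measurableSet_sliver x)).const_mul 2
    simpa [Set.indicator] using this
  have heq : ∀ ε : ℝ, ∫ y in {y : E | ε < dist y x},
      2 * Set.indicator (sliver n x) (w n s x) y
      = ∫ y : E, Set.indicator {y : E | ε < dist y x}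
          (fun y => 2 * Set.indicator (sliver n x) (w n s x) y) y := by
    intro ε
    rw [integral_indicator (measurableSet_far x ε)]
  have htarget : 2 * ∫ y in sliver n x, w n s x y
      = ∫ y : E, 2 * Set.indicator (sliver n x) (w n s x) y := by
    rw [MeasureTheory.integral_const_mul, ← integral_indicator (measurableSet_sliver x)]
  rw [htarget]
  simp_rw [heq]
  apply tendsto_integral_filter_of_dominated_convergence
    (bound := fun y => 2 * Set.indicator (sliver n x) (w n s x) y)
  · filter_upwards with ε
    exact (hint.aestronglyMeasurable.indicator (measurableSet_far x ε))
  · filter_upwards with ε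
    filter_upwards with y
    have hnn : 0 ≤ 2 * Set.indicator (sliver n x) (w n s x) y :=
      mul_nonneg (by norm_num) (Set.indicator_nonneg (fun z _ => w_nonneg x z) y)
    rw [Set.indicator_apply]
    split_ifs with h
    · rw [Real.norm_of_nonneg hnn]
    · simpa using hnn
  · exact hint
  · have hne : ∀ᵐ y : E, y ≠ x := by
      rw [ae_iff]
      push_neg
      simpa using singleton_null x hx
    filter_upwards [hne] with y hy
    have hd : 0 < dist y x := dist_pos.mpr hy
    apply Tendsto.congr' ?_ tendsto_const_nhds
    filter_upwards [Ioo_mem_nhdsGT_of_mem (Set.mem_Ico.mpr ⟨le_refl (0:ℝ), hd⟩)] with ε hε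
    have hmem : y ∈ {z : E | ε < dist z x} := hε.2
    exact (Set.indicator_of_mem hmem (fun z : E => 2 * Set.indicator (sliver n x) (w n s x) z)).symm

lemma measurableSet_hspace (x : E) : MeasurableSet (hspace n x) :=
  measurableSet_lt (measurable_id.inner (𝕜 := ℝ) measurable_const) measurable_const

lemma indicator_diff_abs_le (A : Set E) (y : E) :
    |Set.indicator Aᶜ (fun _ => (1:ℝ)) y - Set.indicator A (fun _ => (1:ℝ)) y| ≤ 1 := by
  by_cases h : y ∈ A
  · simp [Set.indicator_of_mem h, Set.indicator_of_notMem (Set.notMem_compl_iff.mpr h)]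
  · simp [Set.indicator_of_notMem h, Set.indicator_of_mem (Set.mem_compl h)]

lemma integrableOn_indicator_diff (hs : 0 < s) (x : E) (A : Set E) (hA : MeasurableSet A)
    {ε : ℝ} (hε : 0 < ε) :
    IntegrableOn (fun y : E => (Set.indicator Aᶜ (fun _ => (1:ℝ)) y
      - Set.indicator A (fun _ => (1:ℝ)) y) * w n s x y) {y : E | ε < dist y x} := by
  refine (integrable_far hs x hε).mono' ?_ ?_
  · exact (((measurable_const.indicator hA.compl).sub
      (measurable_const.indicator hA)).mul (measurable_w x)).aestronglyMeasurable.restrict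
  · filter_upwards with y
    rw [Real.norm_eq_abs, abs_mul, abs_of_nonneg (w_nonneg x y)]
    calc |Set.indicator Aᶜ (fun _ => (1:ℝ)) y - Set.indicator A (fun _ => (1:ℝ)) y| * w n s x y
        ≤ 1 * w n s x y := mul_le_mul_of_nonneg_right (indicator_diff_abs_le A y) (w_nonneg x y)
      _ = w n s x y := one_mul _

lemma integrable_sliver_part (hs : s ∈ Set.Ioo (0:ℝ) 1) (x : E) (hx : ‖x‖ = 1) :
    Integrable (fun y => 2 * Set.indicator (sliver n x) (w n s x) y) := by
  have := ((integrableOn_sliver hs x hx).integrable_indicator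
    (measurableSet_sliver x)).const_mul 2
  simpa [Set.indicator] using this

lemma hasFracMeanCurv_ball (hs : s ∈ Set.Ioo (0:ℝ) 1) (x : E) (hx : ‖x‖ = 1) :
    HasFracMeanCurvAt n s (ball (0:E) 1) x (2 * ∫ y in sliver n x, w n s x y) := by
  unfold HasFracMeanCurvAt
  have hev : (fun ε : ℝ => ∫ y in {y : E | ε < dist y x},
        2 * Set.indicator (sliver n x) (w n s x) y)
      =ᶠ[nhdsWithin 0 (Set.Ioi 0)] (fun ε : ℝ => ∫ y in {y : E | ε < dist y x},
        (Set.indicator (ball (0:E) 1)ᶜ (fun _ => (1:ℝ)) y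
          - Set.indicator (ball (0:E) 1) (fun _ => (1:ℝ)) y) * ‖x - y‖ ^ (-((n : ℝ) + s))) := by
    filter_upwards [self_mem_nhdsWithin] with ε hε
    have hεpos : (0:ℝ) < ε := hε
    have hIh := integrableOn_indicator_diff (n := n) hs.1 x (hspace n x)
      (measurableSet_hspace x) hεpos
    have hIs : IntegrableOn (fun y => 2 * Set.indicator (sliver n x) (w n s x) y)
        {y : E | ε < dist y x} := (integrable_sliver_part hs x hx).integrableOn
    symm
    calc ∫ y in {y : E | ε < dist y x},
          (Set.indicator (ball (0:E) 1)ᶜ (fun _ => (1:ℝ)) y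
            - Set.indicator (ball (0:E) 1) (fun _ => (1:ℝ)) y) * ‖x - y‖ ^ (-((n : ℝ) + s))
        = ∫ y in {y : E | ε < dist y x},
            ((Set.indicator (hspace n x)ᶜ (fun _ => (1:ℝ)) y
              - Set.indicator (hspace n x) (fun _ => (1:ℝ)) y) * w n s x y
            + 2 * Set.indicator (sliver n x) (w n s x) y) := by
          apply integral_congr_ae
          filter_upwards with y
          exact ball_decomp x hx y
      _ = (∫ y in {y : E | ε < dist y x},
            (Set.indicator (hspace n x)ᶜ (fun _ => (1:ℝ)) y
              - Set.indicator (hspace n x) (fun _ => (1:ℝ)) y) * w n s x y)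
          + ∫ y in {y : E | ε < dist y x},
              2 * Set.indicator (sliver n x) (w n s x) y := integral_add hIh hIs
      _ = ∫ y in {y : E | ε < dist y x}, 2 * Set.indicator (sliver n x) (w n s x) y := by
          rw [halfspace_integral_zero x hx ε, zero_add]
  exact (tendsto_sliver_part hs x hx).congr' hev

lemma ball_small_subset_far (x : E) (hx : ‖x‖ = 1) {r ε : ℝ} (hr : r < 1) (hε : ε < 1 - r) :
    ball (0:E) r ⊆ {y : E | ε < dist y x} := by
  intro y hy
  have h1 : ‖y‖ < r := mem_ball_zero_iff.mp hy
  have h2 : ‖x‖ - ‖y‖ ≤ ‖x - y‖ := norm_sub_norm_le x y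
  have : ε < ‖x - y‖ := by rw [hx] at h2; linarith
  rw [mem_setOf_eq, dist_eq_norm, norm_sub_rev]
  exact this

lemma annulus_decomp (x : E) (hx : ‖x‖ = 1) {r : ℝ} (hr : r < 1) (y : E) :
    (Set.indicator (ball (0:E) 1 \ ball (0:E) r)ᶜ (fun _ => (1:ℝ)) y
        - Set.indicator (ball (0:E) 1 \ ball (0:E) r) (fun _ => (1:ℝ)) y) * w n s x y
      = (Set.indicator (ball (0:E) 1)ᶜ (fun _ => (1:ℝ)) y
          - Set.indicator (ball (0:E) 1) (fun _ => (1:ℝ)) y) * w n s x y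
        + 2 * Set.indicator (ball (0:E) r) (w n s x) y := by
  by_cases hr' : y ∈ ball (0:E) r
  · have hB : y ∈ ball (0:E) 1 := ball_subset_ball hr.le hr'
    have hA : y ∉ ball (0:E) 1 \ ball (0:E) r := fun h => h.2 hr'
    simp only [Set.indicator_of_mem (Set.mem_compl hA), Set.indicator_of_notMem hA,
      Set.indicator_of_mem hB, Set.indicator_of_notMem (Set.notMem_compl_iff.mpr hB),
      Set.indicator_of_mem hr']
    ring
  · by_cases hB : y ∈ ball (0:E) 1
    · have hA : y ∈ ball (0:E) 1 \ ball (0:E) r := ⟨hB, hr'⟩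
      simp only [Set.indicator_of_mem hA, Set.indicator_of_notMem (Set.notMem_compl_iff.mpr hA),
        Set.indicator_of_mem hB, Set.indicator_of_notMem (Set.notMem_compl_iff.mpr hB),
        Set.indicator_of_notMem hr']
      ring
    · have hA : y ∉ ball (0:E) 1 \ ball (0:E) r := fun h => hB h.1
      simp only [Set.indicator_of_mem (Set.mem_compl hA), Set.indicator_of_notMem hA,
        Set.indicator_of_mem (Set.mem_compl hB), Set.indicator_of_notMem hB,
        Set.indicator_of_notMem hr']
      ring

lemma integrableOn_ball_w (hs : 0 < s) (x : E) (hx : ‖x‖ = 1) {r : ℝ} (hr : r < 1) :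
    IntegrableOn (w n s x) (ball (0:E) r) := by
  rcases le_or_gt r 0 with h | h
  · rw [ball_eq_empty.mpr h]
    exact integrableOn_empty
  · exact (integrable_far hs x (by linarith : (0:ℝ) < (1 - r)/2)).mono_set
      (ball_small_subset_far x hx hr (by linarith))

lemma hasFracMeanCurv_annulus (hs : s ∈ Set.Ioo (0:ℝ) 1) {r : ℝ} (hr : r ∈ Set.Ioo (0:ℝ) 1)
    (x : E) (hx : ‖x‖ = 1) :
    HasFracMeanCurvAt n s (ball (0:E) 1 \ ball (0:E) r) x
      ((2 * ∫ y in sliver n x, w n s x y) + 2 * ∫ y in ball (0:E) r, w n s x y) := by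
  unfold HasFracMeanCurvAt
  have hIr := integrableOn_ball_w (n := n) hs.1 x hx hr.2
  have hball := hasFracMeanCurv_ball hs x hx
  unfold HasFracMeanCurvAt at hball
  have hev : (fun ε : ℝ => (∫ y in {y : E | ε < dist y x},
        (Set.indicator (ball (0:E) 1)ᶜ (fun _ => (1:ℝ)) y
          - Set.indicator (ball (0:E) 1) (fun _ => (1:ℝ)) y) * ‖x - y‖ ^ (-((n : ℝ) + s)))
        + 2 * ∫ y in ball (0:E) r, w n s x y)
      =ᶠ[nhdsWithin 0 (Set.Ioi 0)] (fun ε : ℝ => ∫ y in {y : E | ε < dist y x},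
        (Set.indicator (ball (0:E) 1 \ ball (0:E) r)ᶜ (fun _ => (1:ℝ)) y
          - Set.indicator (ball (0:E) 1 \ ball (0:E) r) (fun _ => (1:ℝ)) y)
            * ‖x - y‖ ^ (-((n : ℝ) + s))) := by
    filter_upwards [Ioo_mem_nhdsGT_of_mem
      (Set.mem_Ico.mpr ⟨le_refl (0:ℝ), (by linarith [hr.2] : (0:ℝ) < 1 - r)⟩)] with ε hε
    have hIh := integrableOn_indicator_diff (n := n) hs.1 x (ball (0:E) 1)
      measurableSet_ball hε.1
    have hIs : IntegrableOn (fun y => 2 * Set.indicator (ball (0:E) r) (w n s x) y)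
        {y : E | ε < dist y x} := by
      have h2 : Integrable (fun y => 2 * Set.indicator (ball (0:E) r) (w n s x) y) volume := by
        have := (hIr.integrable_indicator measurableSet_ball).const_mul 2
        simpa [Set.indicator] using this
      exact h2.integrableOn
    symm
    calc ∫ y in {y : E | ε < dist y x},
          (Set.indicator (ball (0:E) 1 \ ball (0:E) r)ᶜ (fun _ => (1:ℝ)) y
            - Set.indicator (ball (0:E) 1 \ ball (0:E) r) (fun _ => (1:ℝ)) y)
              * ‖x - y‖ ^ (-((n : ℝ) + s))
        = ∫ y in {y : E | ε < dist y x},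
            ((Set.indicator (ball (0:E) 1)ᶜ (fun _ => (1:ℝ)) y
              - Set.indicator (ball (0:E) 1) (fun _ => (1:ℝ)) y) * w n s x y
            + 2 * Set.indicator (ball (0:E) r) (w n s x) y) := by
          apply integral_congr_ae
          filter_upwards with y
          exact annulus_decomp x hx hr.2 y
      _ = (∫ y in {y : E | ε < dist y x},
            (Set.indicator (ball (0:E) 1)ᶜ (fun _ => (1:ℝ)) y
              - Set.indicator (ball (0:E) 1) (fun _ => (1:ℝ)) y) * w n s x y)
          + ∫ y in {y : E | ε < dist y x},
              2 * Set.indicator (ball (0:E) r) (w n s x) y := integral_add hIh hIs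
      _ = (∫ y in {y : E | ε < dist y x},
            (Set.indicator (ball (0:E) 1)ᶜ (fun _ => (1:ℝ)) y
              - Set.indicator (ball (0:E) 1) (fun _ => (1:ℝ)) y) * w n s x y)
          + 2 * ∫ y in ball (0:E) r, w n s x y := by
          congr 1
          rw [MeasureTheory.integral_const_mul]
          congr 1
          rw [integral_indicator measurableSet_ball]
          rw [Measure.restrict_restrict measurableSet_ball]
          congr 1
          rw [inter_eq_self_of_subset_left
            (ball_small_subset_far x hx hr.2 hε.2)]
  exact ((hball.add_const _).congr' hev)

lemma transport (x₁ x₂ : E) (hx₁ : ‖x₁‖ = 1) (hx₂ : ‖x₂‖ = 1) :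
    (∫ y in sliver n x₁, w n s x₁ y = ∫ y in sliver n x₂, w n s x₂ y) ∧
      (∀ r : ℝ, ∫ y in ball (0:E) r, w n s x₁ y = ∫ y in ball (0:E) r, w n s x₂ y) := by
  set U := Submodule.reflection (Submodule.span ℝ {x₂ - x₁})ᗮ with hUdef
  have hU : U x₂ = x₁ := Submodule.reflection_sub (hx₂.trans hx₁.symm)
  have hMP : MeasurePreserving (⇑U) volume volume := U.measurePreserving
  have hemb : MeasurableEmbedding (⇑U) := U.toHomeomorph.measurableEmbedding
  have hw : ∀ y : E, w n s x₁ (U y) = w n s x₂ y := by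
    intro y
    unfold w
    congr 1
    rw [← hU, ← map_sub, U.norm_map]
  have hinner : ∀ y : E, (inner ℝ (U y) x₁ : ℝ) = (inner ℝ y x₂ : ℝ) := by
    intro y
    rw [← hU, U.inner_map_map]
  constructor
  · have key := hMP.setIntegral_preimage_emb hemb (w n s x₁) (sliver n x₁)
    have hpre : ⇑U ⁻¹' sliver n x₁ = sliver n x₂ := by
      ext y
      simp only [sliver, mem_preimage, mem_diff, mem_setOf_eq, mem_ball_zero_iff, U.norm_map,
        hinner]
    rw [hpre] at key
    rw [← key]
    apply integral_congr_ae
    filter_upwards with y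
    exact hw y
  · intro r
    have key := hMP.setIntegral_preimage_emb hemb (w n s x₁) (ball (0:E) r)
    have hpre : ⇑U ⁻¹' ball (0:E) r = ball (0:E) r := by
      ext y
      simp only [mem_preimage, mem_ball_zero_iff, U.norm_map]
    rw [hpre] at key
    rw [← key]
    apply integral_congr_ae
    filter_upwards with y
    exact hw y

lemma sliver_integral_pos (hs : s ∈ Set.Ioo (0:ℝ) 1) (x : E) (hx : ‖x‖ = 1) :
    0 < ∫ y in sliver n x, w n s x y := by
  set c : E := (-2 : ℝ) • x with hc
  have hnc : ‖c‖ = 2 := by rw [hc, norm_smul, hx]; norm_num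
  have hsub : ball c (1/2) ⊆ sliver n x := by
    intro y hy
    have hyc : ‖y - c‖ < 1/2 := mem_ball_iff_norm.mp hy
    have hyn : (3/2 : ℝ) ≤ ‖y‖ := by
      have := norm_sub_norm_le c y
      rw [norm_sub_rev] at this
      linarith [this, hnc]
    constructor
    · show (inner ℝ y x : ℝ) < 1
      have h1 : (inner ℝ (y - c) x : ℝ) ≤ ‖y - c‖ * ‖x‖ := real_inner_le_norm _ _
      have h2 : (inner ℝ c x : ℝ) = -2 := by
        rw [hc, real_inner_smul_left, real_inner_self_eq_norm_sq, hx]; norm_num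
      have h3 : (inner ℝ y x : ℝ) = (inner ℝ (y - c) x : ℝ) + (inner ℝ c x : ℝ) := by
        rw [inner_sub_left]; ring
      rw [hx, mul_one] at h1
      rw [h3, h2]; linarith
    · intro hmem
      have := mem_ball_zero_iff.mp hmem
      linarith
  have hlow : ∀ y ∈ ball c (1/2), (4:ℝ) ^ (-((n:ℝ)+s)) ≤ w n s x y := by
    intro y hy
    have hyc : ‖y - c‖ < 1/2 := mem_ball_iff_norm.mp hy
    have hyn : ‖y‖ ≤ 5/2 := by
      have := norm_le_norm_add_norm_sub' y c  -- fallback below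
      calc ‖y‖ = ‖(y - c) + c‖ := by rw [sub_add_cancel]
        _ ≤ ‖y - c‖ + ‖c‖ := norm_add_le _ _
        _ ≤ 5/2 := by linarith [hnc]
    have hub : ‖x - y‖ ≤ 4 := by
      calc ‖x - y‖ ≤ ‖x‖ + ‖y‖ := norm_sub_le _ _
        _ ≤ 4 := by rw [hx]; linarith
    have hpos : 0 < ‖x - y‖ := by
      have h1 : (3/2 : ℝ) ≤ ‖y‖ := by
        have := norm_sub_norm_le c y
        rw [norm_sub_rev] at this
        linarith [this, hnc]
      have := norm_sub_norm_le y x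
      rw [norm_sub_rev]
      linarith [this, hx.le, hx ▸ le_refl ‖x‖]
    exact Real.rpow_le_rpow_of_nonpos hpos hub
      (by nlinarith [hs.1, Nat.cast_nonneg (α := ℝ) n])
  have hvol : 0 < (volume (ball c (1/2))).toReal :=
    ENNReal.toReal_pos (measure_ball_pos volume c (by norm_num)).ne' measure_ball_lt_top.ne
  have hIball : IntegrableOn (w n s x) (ball c (1/2)) :=
    (integrableOn_sliver hs x hx).mono_set hsub
  calc (0:ℝ) < (4:ℝ) ^ (-((n:ℝ)+s)) * (volume (ball c (1/2))).toReal :=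
        mul_pos (Real.rpow_pos_of_pos (by norm_num) _) hvol
    _ ≤ ∫ y in ball c (1/2), w n s x y :=
        setIntegral_ge_of_const_le_real measurableSet_ball measure_ball_lt_top.ne hlow hIball
    _ ≤ ∫ y in sliver n x, w n s x y := by
        apply setIntegral_mono_set (integrableOn_sliver hs x hx)
        · filter_upwards with y using w_nonneg x y
        · exact HasSubset.Subset.eventuallyLE hsub

lemma ball_integral_lt (hs : s ∈ Set.Ioo (0:ℝ) 1) (x : E) (hx : ‖x‖ = 1) {r₁ r₂ : ℝ}
    (h1 : 0 < r₁) (h2 : r₁ < r₂) (h3 : r₂ < 1) :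
    ∫ y in ball (0:E) r₁, w n s x y < ∫ y in ball (0:E) r₂, w n s x y := by
  have hint2 := integrableOn_ball_w (n := n) hs.1 x hx h3
  have hdiff := integral_diff (f := w n s x) (μ := volume) measurableSet_ball hint2
    (ball_subset_ball h2.le)
  set c : E := ((r₁ + r₂)/2) • x with hc
  set δ : ℝ := (r₂ - r₁)/2 with hδ
  have hnc : ‖c‖ = (r₁ + r₂)/2 := by
    rw [hc, norm_smul, hx, mul_one, Real.norm_of_nonneg (by linarith)]
  have hsub : ball c δ ⊆ ball (0:E) r₂ \ ball (0:E) r₁ := by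
    intro y hy
    have hyc : ‖y - c‖ < δ := mem_ball_iff_norm.mp hy
    constructor
    · rw [mem_ball_zero_iff]
      calc ‖y‖ = ‖(y - c) + c‖ := by rw [sub_add_cancel]
        _ ≤ ‖y - c‖ + ‖c‖ := norm_add_le _ _
        _ < r₂ := by rw [hnc]; rw [hδ] at hyc; linarith
    · intro hmem
      have hyr : ‖y‖ < r₁ := mem_ball_zero_iff.mp hmem
      have := norm_sub_norm_le c y
      rw [norm_sub_rev] at this
      rw [hnc] at this
      rw [hδ] at hyc
      linarith
  have hlow : ∀ y ∈ ball c δ, (2:ℝ) ^ (-((n:ℝ)+s)) ≤ w n s x y := by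
    intro y hy
    have hyB := hsub hy
    have hyn : ‖y‖ < r₂ := mem_ball_zero_iff.mp hyB.1
    have hub : ‖x - y‖ ≤ 2 := by
      calc ‖x - y‖ ≤ ‖x‖ + ‖y‖ := norm_sub_le _ _
        _ ≤ 2 := by rw [hx]; linarith
    have hpos : 0 < ‖x - y‖ := by
      have := norm_sub_norm_le x y
      rw [hx] at this
      linarith
    exact Real.rpow_le_rpow_of_nonpos hpos hub
      (by nlinarith [hs.1, Nat.cast_nonneg (α := ℝ) n])
  have hδ0 : 0 < δ := by rw [hδ]; linarith
  have hvol : 0 < (volume (ball c δ)).toReal :=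
    ENNReal.toReal_pos (measure_ball_pos volume c hδ0).ne' measure_ball_lt_top.ne
  have hIdiff : IntegrableOn (w n s x) (ball (0:E) r₂ \ ball (0:E) r₁) :=
    hint2.mono_set diff_subset
  have hpos : 0 < ∫ y in ball (0:E) r₂ \ ball (0:E) r₁, w n s x y := by
    calc (0:ℝ) < (2:ℝ) ^ (-((n:ℝ)+s)) * (volume (ball c δ)).toReal :=
          mul_pos (Real.rpow_pos_of_pos (by norm_num) _) hvol
      _ ≤ ∫ y in ball c δ, w n s x y :=
          setIntegral_ge_of_const_le_real measurableSet_ball measure_ball_lt_top.ne hlow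
            (hIdiff.mono_set hsub)
      _ ≤ ∫ y in ball (0:E) r₂ \ ball (0:E) r₁, w n s x y := by
          apply setIntegral_mono_set hIdiff
          · filter_upwards with y using w_nonneg x y
          · exact HasSubset.Subset.eventuallyLE hsub
  linarith [hdiff, hpos]

end AnnulusCurv

theorem annulus_outer_curv_strictMono (n : ℕ) (hn : 1 ≤ n) (s : ℝ)
    (hs : s ∈ Set.Ioo (0 : ℝ) 1) :
    ∃ (Hout : ℝ → ℝ) (k : ℝ),
      (∀ x : EuclideanSpace ℝ (Fin n), ‖x‖ = 1 →
        HasFracMeanCurvAt n s (Metric.ball 0 1) x k) ∧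
      0 < k ∧
      (∀ r ∈ Set.Ioo (0 : ℝ) 1,
        ∀ x : EuclideanSpace ℝ (Fin n), ‖x‖ = 1 →
          HasFracMeanCurvAt n s (Metric.ball 0 1 \ Metric.ball 0 r) x (Hout r)) ∧
      StrictMonoOn Hout (Set.Ioo (0 : ℝ) 1) ∧
      (∀ r ∈ Set.Ioo (0 : ℝ) 1, k ≤ Hout r) := by
  classical
  set x₀ : EuclideanSpace ℝ (Fin n) := EuclideanSpace.single (⟨0, hn⟩ : Fin n) (1:ℝ) with hx₀def
  have hx₀ : ‖x₀‖ = 1 := by rw [hx₀def, EuclideanSpace.norm_single]; norm_num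
  set k : ℝ := 2 * ∫ y in AnnulusCurv.sliver n x₀, AnnulusCurv.w n s x₀ y with hk
  refine ⟨fun r => k + 2 * ∫ y in Metric.ball (0 : EuclideanSpace ℝ (Fin n)) r,
    AnnulusCurv.w n s x₀ y, k, ?_, ?_, ?_, ?_, ?_⟩
  · intro x hx
    have h := AnnulusCurv.hasFracMeanCurv_ball hs x hx
    rw [hk, (AnnulusCurv.transport x₀ x hx₀ hx).1]
    exact h
  · rw [hk]
    exact mul_pos two_pos (AnnulusCurv.sliver_integral_pos hs x₀ hx₀)
  · intro r hr x hx
    have h := AnnulusCurv.hasFracMeanCurv_annulus hs hr x hx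
    beta_reduce
    rw [hk, (AnnulusCurv.transport x₀ x hx₀ hx).1, (AnnulusCurv.transport x₀ x hx₀ hx).2 r]
    exact h
  · intro r₁ h1 r₂ h2 hlt
    have := AnnulusCurv.ball_integral_lt hs x₀ hx₀ h1.1 hlt h2.2
    beta_reduce
    linarith
  · intro r hr
    have h0 : 0 ≤ ∫ y in Metric.ball (0 : EuclideanSpace ℝ (Fin n)) r,
        AnnulusCurv.w n s x₀ y :=
      setIntegral_nonneg measurableSet_ball (fun y _ => AnnulusCurv.w_nonneg x₀ y)
    beta_reduce
    linarith
end
end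

section
/- Let n ≥ 1, s ∈ (0,1) and 0 < r < r' < 1. Then for any points x_r, x_{r'} ∈ ℝⁿ with |x_r| = r and |x_{r'}| = r', the integrals ∫_{ℝⁿ∖B_1} |x_r − y|^{−(n+s)} dy and ∫_{ℝⁿ∖B_1} |x_{r'} − y|^{−(n+s)} dy are finite and satisfy ∫_{ℝⁿ∖B_1} |x_r − y|^{−(n+s)} dy < ∫_{ℝⁿ∖B_1} |x_{r'} − y|^{−(n+s)} dy. -/
open MeasureTheory Filter Metric Set Module
open scoped RealInnerProductSpace

variable {n : ℕ}

lemma aux_integrable (a : ℝ) (ha : (n : ℝ) < a) (x : EuclideanSpace ℝ (Fin n))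
    (hx : ‖x‖ < 1) :
    IntegrableOn (fun y => ‖x - y‖ ^ (-a)) (Metric.ball (0 : EuclideanSpace ℝ (Fin n)) 1)ᶜ volume := by
  have ha0 : 0 < a := lt_of_le_of_lt (Nat.cast_nonneg n) ha
  set c : ℝ := (1 - ‖x‖) / 2 with hc
  have hc0 : 0 < c := by simp only [hc]; linarith
  have hnr : (finrank ℝ (EuclideanSpace ℝ (Fin n)) : ℝ) < a := by
    rwa [finrank_euclideanSpace_fin]
  refine Integrable.mono'
    (((integrable_one_add_norm (μ := (volume : Measure (EuclideanSpace ℝ (Fin n)))) hnr).const_mul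
      (c ^ (-a))).restrict) ?_ ?_
  · apply Measurable.aestronglyMeasurable (by fun_prop)
  · filter_upwards [ae_restrict_mem measurableSet_ball.compl] with y hy
    have hy1 : 1 ≤ ‖y‖ := by
      simpa [mem_ball_zero_iff, not_lt] using hy
    have hbound : c * (1 + ‖y‖) ≤ ‖x - y‖ := by
      have h1 : ‖y‖ - ‖x‖ ≤ ‖x - y‖ := by
        rw [norm_sub_rev]; exact norm_sub_norm_le _ _
      have hx0 : 0 ≤ ‖x‖ := norm_nonneg x
      nlinarith [mul_nonneg (sub_nonneg.mpr hy1) hx0]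
    have hpos : 0 < c * (1 + ‖y‖) := by positivity
    rw [Real.norm_of_nonneg (Real.rpow_nonneg (norm_nonneg _) _)]
    calc ‖x - y‖ ^ (-a) ≤ (c * (1 + ‖y‖)) ^ (-a) :=
          Real.rpow_le_rpow_of_nonpos hpos hbound (neg_nonpos.mpr ha0.le)
      _ = c ^ (-a) * (1 + ‖y‖) ^ (-a) := Real.mul_rpow hc0.le (by positivity)

lemma aux_cov (f : EuclideanSpace ℝ (Fin n) ≃ₗᵢ[ℝ] EuclideanSpace ℝ (Fin n))
    (g : EuclideanSpace ℝ (Fin n) → ℝ) (s : Set (EuclideanSpace ℝ (Fin n)))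
    (hs : ⇑f ⁻¹' s = s) : ∫ y in s, g (f y) = ∫ y in s, g y := by
  have h := f.measurePreserving.setIntegral_preimage_emb
      (f.toHomeomorph.measurableEmbedding) g s
  rwa [hs] at h

set_option maxHeartbeats 2000000 in
theorem complement_integral_mono (n : ℕ) (hn : 1 ≤ n) (s r r' : ℝ)
    (hs : s ∈ Set.Ioo (0 : ℝ) 1) (hr : 0 < r) (hrr' : r < r') (hr' : r' < 1)
    (xr xr' : EuclideanSpace ℝ (Fin n)) (hx : ‖xr‖ = r) (hx' : ‖xr'‖ = r') :
    IntegrableOn (fun y => ‖xr - y‖ ^ (-((n : ℝ) + s)))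
      (Metric.ball (0 : EuclideanSpace ℝ (Fin n)) 1)ᶜ volume ∧
    IntegrableOn (fun y => ‖xr' - y‖ ^ (-((n : ℝ) + s)))
      (Metric.ball (0 : EuclideanSpace ℝ (Fin n)) 1)ᶜ volume ∧
    (∫ y in (Metric.ball (0 : EuclideanSpace ℝ (Fin n)) 1)ᶜ, ‖xr - y‖ ^ (-((n : ℝ) + s))) <
      ∫ y in (Metric.ball (0 : EuclideanSpace ℝ (Fin n)) 1)ᶜ, ‖xr' - y‖ ^ (-((n : ℝ) + s)) := by
  obtain ⟨hs0, hs1⟩ := hs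
  set a : ℝ := (n : ℝ) + s with ha_def
  have ha : (n : ℝ) < a := by simp only [ha_def]; linarith
  have ha0 : 0 < a := lt_of_le_of_lt (Nat.cast_nonneg n) ha
  have hr1 : r < 1 := hrr'.trans hr'
  have hr'0 : 0 < r' := hr.trans hrr'
  have hIr : IntegrableOn (fun y => ‖xr - y‖ ^ (-a))
      (Metric.ball (0 : EuclideanSpace ℝ (Fin n)) 1)ᶜ volume :=
    aux_integrable a ha xr (by rw [hx]; exact hr1)
  have hIr' : IntegrableOn (fun y => ‖xr' - y‖ ^ (-a))
      (Metric.ball (0 : EuclideanSpace ℝ (Fin n)) 1)ᶜ volume :=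
    aux_integrable a ha xr' (by rw [hx']; exact hr')
  refine ⟨hIr, hIr', ?_⟩
  -- set up direction vector
  set e : EuclideanSpace ℝ (Fin n) := (r')⁻¹ • xr' with he_def
  have he : ‖e‖ = 1 := by
    rw [he_def, norm_smul, hx', norm_inv, Real.norm_eq_abs, abs_of_pos hr'0,
      inv_mul_cancel₀ hr'0.ne']
  have hxe : ‖r • e‖ = r := by rw [norm_smul, he, mul_one, Real.norm_eq_abs, abs_of_pos hr]
  have hx'e : r' • e = xr' := by rw [he_def, smul_smul, mul_inv_cancel₀ hr'0.ne', one_smul]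
  set A : Set (EuclideanSpace ℝ (Fin n)) := (Metric.ball (0 : EuclideanSpace ℝ (Fin n)) 1)ᶜ
    with hA_def
  have hAmeas : MeasurableSet A := measurableSet_ball.compl
  -- Step A: replace xr by r • e
  have hA1 : ∫ y in A, ‖xr - y‖ ^ (-a) = ∫ y in A, ‖r • e - y‖ ^ (-a) := by
    set g := Submodule.reflection (ℝ ∙ ((r • e) - xr))ᗮ with hg_def
    have hgx : g (r • e) = xr := Submodule.reflection_sub (by rw [hxe, hx])
    have hgpre : ⇑g ⁻¹' A = A := by
      ext z
      simp [hA_def, mem_ball_zero_iff, g.norm_map]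
    have h1 := aux_cov g (fun w => ‖xr - w‖ ^ (-a)) A hgpre
    have h2 : ∀ y, ‖xr - g y‖ = ‖r • e - y‖ := fun y => by
      rw [← hgx, ← map_sub, g.norm_map]
    rw [← h1]
    simp_rw [h2]
  rw [hA1]
  -- Step B: the affine reflection R
  set c : ℝ := r + r' with hc_def
  have hc0 : 0 < c := by simp only [hc_def]; linarith
  have hc2 : c < 2 := by simp only [hc_def]; linarith
  set T := Submodule.reflection (ℝ ∙ e)ᗮ with hT_def
  have hTe : T e = -e := Submodule.reflection_orthogonalComplement_singleton_eq_neg e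
  set R : EuclideanSpace ℝ (Fin n) → EuclideanSpace ℝ (Fin n) := fun z => c • e + T z
    with hR_def
  have hTT : ∀ z, T (T z) = z := fun z => Submodule.reflection_reflection _ z
  have hRR : ∀ z, R (R z) = z := fun z => by
    simp only [hR_def, map_add, _root_.map_smul, hTe, smul_neg, hTT]
    abel
  have hmp : MeasurePreserving R volume volume :=
    (measurePreserving_add_left volume (c • e)).comp T.measurePreserving
  have hemb : MeasurableEmbedding R :=
    (MeasurableEquiv.addLeft (c • e)).measurableEmbedding.comp
      T.toHomeomorph.measurableEmbedding
  have hnormR : ∀ z, ‖r • e - R z‖ = ‖xr' - z‖ := fun z => by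
    have hsub : r • e - R z = T (r' • e - z) := by
      simp only [hR_def, map_sub, _root_.map_smul, hTe, smul_neg, hc_def, add_smul]
      abel
    rw [hsub, T.norm_map, hx'e]
  have hinner : ∀ z, (inner ℝ e (T z) : ℝ) = -(inner ℝ e z : ℝ) := fun z => by
    have h := T.inner_map_map e (T z)
    rw [hTe, hTT, inner_neg_left] at h
    linarith [h]
  have hRnormsq : ∀ z, ‖R z‖ ^ 2 = ‖z‖ ^ 2 + c ^ 2 - 2 * c * (inner ℝ e z : ℝ) := fun z => by
    have h := norm_add_sq_real (c • e) (T z)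
    rw [real_inner_smul_left, hinner z, T.norm_map, norm_smul, he, mul_one,
      Real.norm_eq_abs, sq_abs] at h
    simp only [hR_def]
    rw [h]; ring
  have hx_sq : ∀ (ρ : ℝ) (z : EuclideanSpace ℝ (Fin n)),
      ‖ρ • e - z‖ ^ 2 = ρ ^ 2 - 2 * ρ * (inner ℝ e z : ℝ) + ‖z‖ ^ 2 := fun ρ z => by
    have h := norm_sub_sq_real (ρ • e) z
    rw [real_inner_smul_left, norm_smul, he, mul_one, Real.norm_eq_abs, sq_abs] at h
    rw [h]; ring
  set D : Set (EuclideanSpace ℝ (Fin n)) := R ⁻¹' (Metric.ball 0 1) with hD_def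
  have hRcont : Continuous R := continuous_const.add T.continuous
  have hDopen : IsOpen D := isOpen_ball.preimage hRcont
  have hDmeas : MeasurableSet D := hDopen.measurableSet
  have hpreA : R ⁻¹' A = Dᶜ := by rw [hA_def, preimage_compl, hD_def]
  have hpreD : R ⁻¹' Dᶜ = A := by
    rw [preimage_compl, hA_def]
    congr 1
    ext z
    simp only [hD_def, mem_preimage, hRR z]
  clear_value a e c T R A D
  -- pointwise strict inequality on A ∩ D
  have hkey : ∀ z ∈ A ∩ D, ‖r • e - z‖ ^ (-a) < ‖xr' - z‖ ^ (-a) := by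
    rintro z ⟨hzA, hzD⟩
    have hz1 : 1 ≤ ‖z‖ := by
      simpa [hA_def, mem_ball_zero_iff, not_lt] using hzA
    have hz2 : ‖R z‖ < 1 := by
      simpa [hD_def, mem_ball_zero_iff] using hzD
    have hiz : c / 2 < (inner ℝ e z : ℝ) := by
      have hsq1 : ‖R z‖ ^ 2 < 1 := by nlinarith [norm_nonneg (R z)]
      have hsq2 : (1 : ℝ) ≤ ‖z‖ ^ 2 := by nlinarith [norm_nonneg z]
      by_contra hcon
      push_neg at hcon
      have h2 : 2 * c * (inner ℝ e z : ℝ) ≤ 2 * c * (c / 2) :=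
        mul_le_mul_of_nonneg_left hcon (by linarith)
      have h3 := hRnormsq z
      nlinarith
    have hzx' : xr' ≠ z := by
      intro h
      rw [h] at hx'
      linarith [hx' ▸ hz1]
    have hlt : ‖xr' - z‖ < ‖r • e - z‖ := by
      have h1 := hx_sq r z
      have h2 := hx_sq r' z
      rw [hx'e] at h2
      have hsq : ‖xr' - z‖ ^ 2 < ‖r • e - z‖ ^ 2 := by nlinarith
      nlinarith [norm_nonneg (r • e - z), norm_nonneg (xr' - z)]
    exact Real.rpow_lt_rpow_of_neg (norm_sub_pos_iff.mpr hzx') hlt (by linarith)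
  -- integrability
  have hIx : IntegrableOn (fun y => ‖r • e - y‖ ^ (-a)) A volume :=
    hA_def ▸ aux_integrable a ha _ (by rw [hxe]; exact hr1)
  -- splitting
  have hsplit : ∀ f : EuclideanSpace ℝ (Fin n) → ℝ, IntegrableOn f A volume →
      ∫ y in A, f y = (∫ y in A ∩ D, f y) + ∫ y in A ∩ Dᶜ, f y := by
    intro f hf
    have h := setIntegral_union
      ((disjoint_compl_right (a := D)).mono inter_subset_right inter_subset_right)
      (hAmeas.inter hDmeas.compl)
      (hf.mono_set inter_subset_left) (hf.mono_set inter_subset_left)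
    rwa [inter_union_compl] at h
  -- equality on A ∩ Dᶜ
  have heq : ∫ y in A ∩ Dᶜ, ‖xr' - y‖ ^ (-a) = ∫ y in A ∩ Dᶜ, ‖r • e - y‖ ^ (-a) := by
    have hpre : R ⁻¹' (A ∩ Dᶜ) = A ∩ Dᶜ := by
      rw [preimage_inter, hpreA, hpreD, inter_comm]
    have h := hmp.setIntegral_preimage_emb hemb (fun y => ‖r • e - y‖ ^ (-a)) (A ∩ Dᶜ)
    rw [hpre] at h
    rw [← h]
    simp_rw [hnormR]
  -- strict inequality on A ∩ D
  have hltS : ∫ y in A ∩ D, ‖r • e - y‖ ^ (-a) < ∫ y in A ∩ D, ‖xr' - y‖ ^ (-a) := by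
    have hSm : MeasurableSet (A ∩ D) := hAmeas.inter hDmeas
    have hiS : IntegrableOn (fun y => ‖r • e - y‖ ^ (-a)) (A ∩ D) volume :=
      hIx.mono_set inter_subset_left
    have hiS' : IntegrableOn (fun y => ‖xr' - y‖ ^ (-a)) (A ∩ D) volume :=
      hIr'.mono_set inter_subset_left
    have hdiff : 0 < ∫ z in A ∩ D, (‖xr' - z‖ ^ (-a) - ‖r • e - z‖ ^ (-a)) := by
      refine (setIntegral_pos_iff_support_of_nonneg_ae ?_ (hiS'.sub hiS)).mpr ?_
      swap
      · have hU : IsOpen ({z : EuclideanSpace ℝ (Fin n) | 1 < ‖z‖} ∩ D) :=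
          ((isOpen_lt continuous_const continuous_norm)).inter hDopen
        have hp : ((1 + c / 2) • e) ∈ ({z : EuclideanSpace ℝ (Fin n) | 1 < ‖z‖} ∩ D) := by
          refine ⟨?_, ?_⟩
          · simp only [mem_setOf_eq]
            rw [norm_smul, he, mul_one, Real.norm_eq_abs, abs_of_pos (by linarith)]
            linarith
          · rw [hD_def, mem_preimage]
            have hval : R ((1 + c / 2) • e) = (c / 2 - 1) • e := by
              have hstep : R ((1 + c / 2) • e) = c • e + (1 + c / 2) • T e := by
                simp only [hR_def, _root_.map_smul]
              rw [hstep, hTe, smul_neg, ← sub_eq_add_neg, ← sub_smul]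
              congr 1
              ring
            rw [mem_ball_zero_iff, hval, norm_smul, he, mul_one, Real.norm_eq_abs, abs_lt]
            constructor <;> linarith
        refine lt_of_lt_of_le (hU.measure_pos volume ⟨_, hp⟩) (measure_mono ?_)
        rintro z ⟨hz1, hzD⟩
        have hzS : z ∈ A ∩ D := by
          refine ⟨?_, hzD⟩
          simp only [hA_def, mem_compl_iff, mem_ball_zero_iff, not_lt]
          exact le_of_lt hz1
        refine ⟨?_, hzS⟩
        have := hkey z hzS
        simp only [Function.mem_support]
        intro hcontra
        simp only [Pi.sub_apply] at hcontra
        rw [sub_eq_zero] at hcontra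
        exact absurd hcontra.symm (ne_of_lt this)
      · filter_upwards [ae_restrict_mem hSm] with z hz
        have := hkey z hz
        simp only [Pi.zero_apply, Pi.sub_apply]
        linarith
    have hsub := integral_sub hiS' hiS
    rw [hsub] at hdiff
    linarith
  rw [hsplit _ hIx, hsplit _ hIr']
  rw [heq]
  exact add_lt_add_of_lt_of_le hltS le_rfl
end
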